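/- Suppose the dual tensor code C = C_A ⊗ F_2^B + F_2^A ⊗ C_B is w-robust with 0 < w < d_A·d_B. Then for any codeword x ∈ C with |x| ≤ w, there exist subsets A' ⊆ A with |A'| ≤ |x|/d_B and B' ⊆ B with |B'| ≤ |x|/d_A, together with a decomposition x = c + r where c ∈ C_A ⊗ F_2^{B'} and r ∈ F_2^{A'} ⊗ C_B. -/

import Mathlib

open Finset

variable {A B : Type*} [Fintype A] [Fintype B]

/-- Hamming weight of a vector. -/
def wtv [DecidableEq A] (x : A → ZMod 2) : ℕ :=
  (Finset.univ.filter fun a => x a ≠ 0).card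

/-- Hamming weight of a matrix. -/
def wtm (x : A → B → ZMod 2) : ℕ :=
  (Finset.univ.filter fun p : A × B => x p.1 p.2 ≠ 0).card

/-- The code of matrices all of whose columns lie in `CA`. -/
def colCode (CA : Submodule (ZMod 2) (A → ZMod 2)) :
    Submodule (ZMod 2) (A → B → ZMod 2) where
  carrier := {x | ∀ b : B, (fun a => x a b) ∈ CA}
  zero_mem' := fun _ => CA.zero_mem
  add_mem' := fun hx hy b => CA.add_mem (hx b) (hy b)
  smul_mem' := fun c x hx b => CA.smul_mem c (hx b)

/-- The code of matrices all of whose rows lie in `CB`. -/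
def rowCode (CB : Submodule (ZMod 2) (B → ZMod 2)) :
    Submodule (ZMod 2) (A → B → ZMod 2) where
  carrier := {x | ∀ a : A, x a ∈ CB}
  zero_mem' := fun _ => CB.zero_mem
  add_mem' := fun hx hy a => CB.add_mem (hx a) (hy a)
  smul_mem' := fun c x hx a => CB.smul_mem c (hx a)

/-- The tensor code: matrices whose columns lie in `CA` and rows lie in `CB`. -/
def tensorCode (CA : Submodule (ZMod 2) (A → ZMod 2))
    (CB : Submodule (ZMod 2) (B → ZMod 2)) :
    Submodule (ZMod 2) (A → B → ZMod 2) where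
  carrier := {x | (∀ b : B, (fun a => x a b) ∈ CA) ∧ (∀ a : A, x a ∈ CB)}
  zero_mem' := ⟨fun _ => CA.zero_mem, fun _ => CB.zero_mem⟩
  add_mem' := fun hx hy =>
    ⟨fun b => CA.add_mem (hx.1 b) (hy.1 b), fun a => CB.add_mem (hx.2 a) (hy.2 a)⟩
  smul_mem' := fun c x hx =>
    ⟨fun b => CA.smul_mem c (hx.1 b), fun a => CB.smul_mem c (hx.2 a)⟩

/-- Minimum distance of a code of vectors: smallest weight of a nonzero codeword. -/
noncomputable def minDistV [DecidableEq A] (C : Submodule (ZMod 2) (A → ZMod 2)) : ℕ :=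
  sInf {n | ∃ x ∈ C, x ≠ 0 ∧ wtv x = n}

/-- Minimum distance of a code of matrices. -/
noncomputable def minDistM (C : Submodule (ZMod 2) (A → B → ZMod 2)) : ℕ :=
  sInf {n | ∃ x ∈ C, x ≠ 0 ∧ wtm x = n}

/-- Dual of a code of vectors. -/
def dualV (C : Submodule (ZMod 2) (A → ZMod 2)) :
    Submodule (ZMod 2) (A → ZMod 2) where
  carrier := {x | ∀ y ∈ C, ∑ a, x a * y a = 0}
  zero_mem' := by intro y hy; simp
  add_mem' := by
    intro x x' hx hx' y hy
    have h1 := hx y hy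
    have h2 := hx' y hy
    simp only [Pi.add_apply, add_mul, Finset.sum_add_distrib, h1, h2, add_zero]
  smul_mem' := by
    intro c x hx y hy
    have h := hx y hy
    simp only [Pi.smul_apply, smul_eq_mul, mul_assoc, ← Finset.mul_sum, h, mul_zero]

/-- Dual of a code of matrices, w.r.t. the entrywise inner product. -/
def dualM (C : Submodule (ZMod 2) (A → B → ZMod 2)) :
    Submodule (ZMod 2) (A → B → ZMod 2) where
  carrier := {x | ∀ y ∈ C, ∑ a, ∑ b, x a b * y a b = 0}
  zero_mem' := by intro y hy; simp
  add_mem' := by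
    intro x x' hx hx' y hy
    have h1 := hx y hy
    have h2 := hx' y hy
    simp only [Pi.add_apply, add_mul, Finset.sum_add_distrib, h1, h2, add_zero]
  smul_mem' := by
    intro c x hx y hy
    have h := hx y hy
    simp only [Pi.smul_apply, smul_eq_mul, mul_assoc, ← Finset.mul_sum, h, mul_zero]

/-- `w`-robustness of the dual tensor code `C_A ⊗ F₂^B + F₂^A ⊗ C_B`:
every codeword of weight ≤ w has its support in `A' × B ∪ A × B'` with
`|A'| ≤ |x|/d_B` and `|B'| ≤ |x|/d_A`. -/
def wRobust (CA : Submodule (ZMod 2) (A → ZMod 2)) (CB : Submodule (ZMod 2) (B → ZMod 2))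
    (dA dB w : ℕ) : Prop :=
  ∀ x ∈ (colCode CA : Submodule (ZMod 2) (A → B → ZMod 2)) ⊔ rowCode CB,
    wtm x ≤ w →
      ∃ (A' : Finset A) (B' : Finset B),
        A'.card * dB ≤ wtm x ∧ B'.card * dA ≤ wtm x ∧
        ∀ a b, a ∉ A' → b ∉ B' → x a b = 0

/-! ### Auxiliary lemmas -/

/-- The standard bilinear form on `T → ZMod 2`. -/
noncomputable def stdBilin (T : Type*) [Fintype T] :
    LinearMap.BilinForm (ZMod 2) (T → ZMod 2) :=
  LinearMap.mk₂ (ZMod 2) (fun x y => ∑ a, x a * y a)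
    (fun x x' y => by simp [add_mul, Finset.sum_add_distrib])
    (fun c x y => by simp [Finset.mul_sum, smul_eq_mul, mul_assoc])
    (fun x y y' => by simp [mul_add, Finset.sum_add_distrib])
    (fun c x y => by simp [Finset.mul_sum, smul_eq_mul, mul_left_comm])

lemma stdBilin_apply {T : Type*} [Fintype T] (x y : T → ZMod 2) :
    stdBilin T x y = ∑ a, x a * y a := rfl

lemma stdBilin_nondeg (T : Type*) [Fintype T] [DecidableEq T] :
    (stdBilin T).Nondegenerate := by
  constructor
  · intro x hx
    funext a
    have := hx (Pi.single a 1)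
    simpa [stdBilin_apply, Pi.single_apply, mul_ite, Finset.sum_ite_eq'] using this
  · intro x hx
    funext a
    have := hx (Pi.single a 1)
    simpa [stdBilin_apply, Pi.single_apply, ite_mul, Finset.sum_ite_eq] using this

lemma stdBilin_refl (T : Type*) [Fintype T] : (stdBilin T).IsRefl := by
  intro x y h
  rw [stdBilin_apply] at h ⊢
  rw [← h]
  exact Finset.sum_congr rfl fun a _ => mul_comm _ _

lemma mem_dualV {T : Type*} [Fintype T] {C : Submodule (ZMod 2) (T → ZMod 2)}
    {f : T → ZMod 2} : f ∈ dualV C ↔ ∀ y ∈ C, ∑ a, f a * y a = 0 := Iff.rfl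

lemma dualV_eq_orthogonal {T : Type*} [Fintype T]
    (C : Submodule (ZMod 2) (T → ZMod 2)) :
    dualV C = (stdBilin T).orthogonal C := by
  ext f
  rw [mem_dualV, LinearMap.BilinForm.mem_orthogonal_iff]
  constructor
  · intro h y hy
    rw [stdBilin_apply, ← h y hy]
    exact Finset.sum_congr rfl fun a _ => mul_comm _ _
  · intro h y hy
    have := h y hy
    rw [stdBilin_apply] at this
    rw [← this]
    exact Finset.sum_congr rfl fun a _ => mul_comm _ _

/-- Double duality for codes over `ZMod 2`. -/
lemma dualV_dualV {T : Type*} [Fintype T] [DecidableEq T]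
    (C : Submodule (ZMod 2) (T → ZMod 2)) : dualV (dualV C) = C := by
  rw [dualV_eq_orthogonal, dualV_eq_orthogonal,
    LinearMap.BilinForm.orthogonal_orthogonal (stdBilin_nondeg T) (stdBilin_refl T)]

/-- A vector orthogonal to the whole dual code lies in the code. -/
lemma mem_of_dual_orth {T : Type*} [Fintype T] [DecidableEq T]
    {C : Submodule (ZMod 2) (T → ZMod 2)} {v : T → ZMod 2}
    (h : ∀ f ∈ dualV C, ∑ a, v a * f a = 0) : v ∈ C := by
  rw [← dualV_dualV C]
  exact h

/-- The code of vectors supported inside a set `S`. -/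
def suppCode {T : Type*} (S : Finset T) : Submodule (ZMod 2) (T → ZMod 2) where
  carrier := {v | ∀ t ∉ S, v t = 0}
  zero_mem' := fun _ _ => rfl
  add_mem' := fun hx hy t ht => by
    simp only [Pi.add_apply]
    rw [hx t ht, hy t ht, add_zero]
  smul_mem' := fun c v hv t ht => by
    simp only [Pi.smul_apply]
    rw [hv t ht, smul_zero]

/-- A codeword of weight below the minimum distance is zero. -/
lemma eq_zero_of_wt_lt {T : Type*} [Fintype T] [DecidableEq T]
    {C : Submodule (ZMod 2) (T → ZMod 2)} {d : ℕ} (hd : minDistV C = d)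
    {y : T → ZMod 2} (hy : y ∈ C) (hlt : wtv y < d) : y = 0 := by
  by_contra hne
  have hmem : wtv y ∈ {n | ∃ x ∈ C, x ≠ 0 ∧ wtv x = n} := ⟨y, hy, hne, rfl⟩
  have := Nat.sInf_le hmem
  rw [← minDistV] at this
  omega

/-- Weight bound from support containment. -/
lemma wtv_le_card {T : Type*} [Fintype T] [DecidableEq T]
    {y : T → ZMod 2} {S : Finset T} (h : ∀ t ∉ S, y t = 0) : wtv y ≤ S.card := by
  apply Finset.card_le_card
  intro t ht
  simp only [Finset.mem_filter] at ht
  by_contra hts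
  exact ht.2 (h t hts)

theorem robust_decomposition [DecidableEq A] [DecidableEq B]
    (CA : Submodule (ZMod 2) (A → ZMod 2)) (CB : Submodule (ZMod 2) (B → ZMod 2))
    (dA dB w : ℕ) (hdA : minDistV CA = dA) (hdB : minDistV CB = dB)
    (hrob : wRobust CA CB dA dB w) (hw0 : 0 < w) (hw : w < dA * dB)
    (x : A → B → ZMod 2)
    (hx : x ∈ (colCode CA : Submodule (ZMod 2) (A → B → ZMod 2)) ⊔ rowCode CB)
    (hwt : wtm x ≤ w) :
    ∃ (A' : Finset A) (B' : Finset B) (c r : A → B → ZMod 2),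
      A'.card * dB ≤ wtm x ∧ B'.card * dA ≤ wtm x ∧
      c ∈ (colCode CA : Submodule (ZMod 2) (A → B → ZMod 2)) ∧
      r ∈ (rowCode CB : Submodule (ZMod 2) (A → B → ZMod 2)) ∧
      (∀ a b, b ∉ B' → c a b = 0) ∧
      (∀ a b, a ∉ A' → r a b = 0) ∧
      x = c + r := by
  obtain ⟨A', B', hA', hB', hsupp⟩ := hrob x hx hwt
  obtain ⟨c0, hc0, r0, hr0, hsum⟩ := Submodule.mem_sup.mp hx
  have hc0' : ∀ b, (fun a => c0 a b) ∈ CA := hc0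
  have hr0' : ∀ a, r0 a ∈ CB := hr0
  have hdApos : 0 < dA := by
    rcases Nat.eq_zero_or_pos dA with h | h
    · subst h; simp at hw
    · exact h
  have hdBpos : 0 < dB := by
    rcases Nat.eq_zero_or_pos dB with h | h
    · subst h; simp at hw
    · exact h
  have hA'lt : A'.card < dA := by
    by_contra h
    push_neg at h
    have := Nat.mul_le_mul_right dB h
    omega
  have hB'lt : B'.card < dB := by
    by_contra h
    push_neg at h
    have := Nat.mul_le_mul_left dA h
    nlinarith
  -- `c0` decomposition fact: x a b = c0 a b + r0 a b
  have hxab : ∀ a b, x a b = c0 a b + r0 a b := by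
    intro a b
    have := congrFun (congrFun hsum a) b
    exact this.symm
  have hc0ab : ∀ a b, c0 a b = x a b + r0 a b := by
    intro a b
    have h := hxab a b
    have key : ∀ X C R : ZMod 2, X = C + R → C = X + R := by decide
    exact key _ _ _ h
  -- Step 1: every row of c0 lies in CB ⊔ suppCode B'
  have hmemrow : ∀ a, c0 a ∈ CB ⊔ suppCode B' := by
    intro a
    apply mem_of_dual_orth
    intro f hf
    have hfCB : ∀ y ∈ CB, ∑ b, f b * y b = 0 := fun y hy =>
      hf y (Submodule.mem_sup_left hy)
    have hfB' : ∀ b ∈ B', f b = 0 := by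
      intro b hb
      have hmem : (Pi.single b 1 : B → ZMod 2) ∈ suppCode B' := by
        intro t ht
        have : t ≠ b := fun h => ht (h ▸ hb)
        simp [Pi.single_apply, this]
      have := hf (Pi.single b 1) (Submodule.mem_sup_right hmem)
      simpa [Pi.single_apply, mul_ite, Finset.sum_ite_eq'] using this
    -- the auxiliary vector h
    set h : A → ZMod 2 := fun a' => ∑ b, c0 a' b * f b with hh
    have hhCA : h ∈ CA := by
      have heq : h = ∑ b, f b • (fun a' => c0 a' b) := by
        funext a'
        simp only [hh, Finset.sum_apply, Pi.smul_apply, smul_eq_mul]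
        exact Finset.sum_congr rfl fun b _ => mul_comm _ _
      rw [heq]
      exact Submodule.sum_mem _ fun b _ => CA.smul_mem _ (hc0' b)
    have hhzero : ∀ a' ∉ A', h a' = 0 := by
      intro a' ha'
      have h1 : ∑ b, r0 a' b * f b = 0 := by
        rw [← hfCB (r0 a') (hr0' a')]
        exact Finset.sum_congr rfl fun b _ => mul_comm _ _
      have h2 : ∑ b, x a' b * f b = 0 := by
        apply Finset.sum_eq_zero
        intro b _
        by_cases hb : b ∈ B'
        · rw [hfB' b hb, mul_zero]
        · rw [hsupp a' b ha' hb, zero_mul]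
      have : h a' = ∑ b, x a' b * f b + ∑ b, r0 a' b * f b := by
        rw [hh]
        simp only [← Finset.sum_add_distrib, ← add_mul]
        apply Finset.sum_congr rfl
        intro b _
        rw [hc0ab a' b]
      rw [this, h1, h2, add_zero]
    have : h = 0 := by
      apply eq_zero_of_wt_lt hdA hhCA
      calc wtv h ≤ A'.card := wtv_le_card hhzero
        _ < dA := hA'lt
    exact congrFun this a
  -- Step 2: choose the CB-parts of the rows of c0
  have hchoice : ∀ a, ∃ wa, wa ∈ CB ∧ ∀ b ∉ B', wa b = c0 a b := by
    intro a
    obtain ⟨wa, hwa, u, hu, hequ⟩ := Submodule.mem_sup.mp (hmemrow a)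
    refine ⟨wa, hwa, fun b hb => ?_⟩
    have := congrFun hequ b
    simp only [Pi.add_apply] at this
    rw [← this, hu b hb, add_zero]
  choose wv hwv1 hwv2 using hchoice
  -- Step 3: define c and r
  set c : A → B → ZMod 2 := fun a => c0 a - wv a with hc
  set r : A → B → ZMod 2 := fun a => r0 a + wv a with hr
  have hcB' : ∀ a b, b ∉ B' → c a b = 0 := by
    intro a b hb
    simp only [hc, Pi.sub_apply]
    rw [hwv2 a b hb, sub_self]
  have hxcr : ∀ a b, x a b = c a b + r a b := by
    intro a b
    simp only [hc, hr, Pi.sub_apply, Pi.add_apply]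
    rw [hxab a b]
    ring
  -- columns of wv lie in CA
  have hwvcol : ∀ b, (fun a => wv a b) ∈ CA := by
    intro b
    apply mem_of_dual_orth
    intro f hf
    have hfCA : ∀ y ∈ CA, ∑ a, f a * y a = 0 := hf
    set g : B → ZMod 2 := fun b' => ∑ a, f a * wv a b' with hg
    have hgCB : g ∈ CB := by
      have heq : g = ∑ a, f a • wv a := by
        funext b'
        simp only [hg, Finset.sum_apply, Pi.smul_apply, smul_eq_mul]
      rw [heq]
      exact Submodule.sum_mem _ fun a _ => CB.smul_mem _ (hwv1 a)
    have hgzero : ∀ b' ∉ B', g b' = 0 := by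
      intro b' hb'
      have : g b' = ∑ a, f a * c0 a b' := by
        apply Finset.sum_congr rfl
        intro a _
        rw [hwv2 a b' hb']
      rw [this]
      exact hfCA _ (hc0' b')
    have : g = 0 := by
      apply eq_zero_of_wt_lt hdB hgCB
      calc wtv g ≤ B'.card := wtv_le_card hgzero
        _ < dB := hB'lt
    have hgb := congrFun this b
    simp only [hg, Pi.zero_apply] at hgb
    rw [← hgb]
    exact Finset.sum_congr rfl fun a _ => mul_comm _ _
  have hcCol : c ∈ colCode CA := by
    intro b
    have : (fun a => c a b) = (fun a => c0 a b) - (fun a => wv a b) := by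
      funext a; simp [hc]
    rw [this]
    exact CA.sub_mem (hc0' b) (hwvcol b)
  have hrRow : r ∈ rowCode CB := by
    intro a
    exact CB.add_mem (hr0' a) (hwv1 a)
  have hrA' : ∀ a b, a ∉ A' → r a b = 0 := by
    intro a b ha
    have hra : r a ∈ CB := hrRow a
    have hrsupp : ∀ b' ∉ B', r a b' = 0 := by
      intro b' hb'
      have := hxcr a b'
      rw [hsupp a b' ha hb', hcB' a b' hb', zero_add] at this
      exact this.symm
    have : r a = 0 := by
      apply eq_zero_of_wt_lt hdB hra
      calc wtv (r a) ≤ B'.card := wtv_le_card hrsupp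
        _ < dB := hB'lt
    exact congrFun this b
  refine ⟨A', B', c, r, hA', hB', hcCol, hrRow, fun a b hb => hcB' a b hb,
    fun a b ha => hrA' a b ha, ?_⟩
  funext a
  funext b
  exact hxcr a b
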